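/- Let a ∈ (0,1), δ ≥ 1, and τ(v) = (√((v²/δ - a)² + 4v²/δ) - (v²/δ - a))/2. Then the fixed point ξ(δ) = (√((δ-1)² + 4δa) - (δ-1))/2 satisfies |τ(v) - ξ(δ)| ≤ (1/√δ)·(1 - (4/(5+√5))·(a/√δ))·|v - ξ(δ)| for all v ∈ [a, 1). -/

import Mathlib

theorem posfac {x y z : ℝ} (h : x*y = z) (hy : 0 < y) (hz : 0 < z) : 0 < x := by
  rcases lt_trichotomy x 0 with hx|hx|hx
  · nlinarith
  · rw [hx, zero_mul] at h; linarith
  · exact hx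

theorem nonnegfac {x y z : ℝ} (h : x*y = z) (hy : 0 < y) (hz : 0 ≤ z) : 0 ≤ x := by
  rcases lt_trichotomy x 0 with hx|hx|hx
  · nlinarith
  · linarith
  · linarith

theorem auxJ (e x r : ℝ) (he : 0 ≤ e) (hx0 : 0 ≤ x) (hx1 : x ≤ 1)
    (hr : 2 ≤ r) (hr' : r ≤ 9/4) :
    0 ≤ (r/2)*x + x^2 + (1-r)*x^3 + (2+3*r)*(e*x) + (7-4*r)*(e*x^2)
      + (r/2)*e^2 + (11+3*r)*(e^2*x) + (5-2*r)*(e^2*x^2) + 2*r*e^3 + (13+4*r)*(e^3*x)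
      + e^3*x^2 + 3*r*e^4 + (6+7/2*r)*(e^4*x) + 2*r*e^5 + (1+r)*(e^5*x) + (r/2)*e^6 := by
  have hx2 : (0:ℝ) ≤ x^2*(1-x) := mul_nonneg (sq_nonneg x) (by linarith)
  have hx3 : (0:ℝ) ≤ x*(1-x) := mul_nonneg hx0 (by linarith)
  have hex : (0:ℝ) ≤ e*x := mul_nonneg he hx0
  have hexx : (0:ℝ) ≤ e*(x*(1-x)) := mul_nonneg he hx3
  have he2 : (0:ℝ) ≤ e^2 := sq_nonneg e
  have he2x : (0:ℝ) ≤ e^2*x := mul_nonneg he2 hx0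
  have he2x2 : (0:ℝ) ≤ e^2*x^2 := mul_nonneg he2 (sq_nonneg x)
  have he3 : (0:ℝ) ≤ e^3 := pow_nonneg he 3
  have he3x : (0:ℝ) ≤ e^3*x := mul_nonneg he3 hx0
  have he3x2 : (0:ℝ) ≤ e^3*x^2 := mul_nonneg he3 (sq_nonneg x)
  have he4 : (0:ℝ) ≤ e^4 := pow_nonneg he 4
  have he4x : (0:ℝ) ≤ e^4*x := mul_nonneg he4 hx0
  have he5 : (0:ℝ) ≤ e^5 := pow_nonneg he 5
  have he5x : (0:ℝ) ≤ e^5*x := mul_nonneg he5 hx0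
  have he6 : (0:ℝ) ≤ e^6 := pow_nonneg he 6
  linarith [mul_nonneg (by linarith : (0:ℝ) ≤ r-1) hx2,
    mul_nonneg (by linarith : (0:ℝ) ≤ r-2) hx3,
    mul_nonneg (by linarith : (0:ℝ) ≤ 2-r/2) hx0,
    mul_nonneg (by linarith : (0:ℝ) ≤ 4*r-7) hexx,
    mul_nonneg (by linarith : (0:ℝ) ≤ 9-r) hex,
    mul_nonneg (by linarith : (0:ℝ) ≤ r) he2,
    mul_nonneg (by linarith : (0:ℝ) ≤ r) he2x,
    mul_nonneg (by linarith : (0:ℝ) ≤ 9/2-2*r) he2x2,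
    mul_nonneg (by linarith : (0:ℝ) ≤ r) he3,
    mul_nonneg (by linarith : (0:ℝ) ≤ r) he3x,
    mul_nonneg (by linarith : (0:ℝ) ≤ r) he4,
    mul_nonneg (by linarith : (0:ℝ) ≤ r) he4x,
    mul_nonneg (by linarith : (0:ℝ) ≤ r) he5,
    mul_nonneg (by linarith : (0:ℝ) ≤ r) he5x,
    mul_nonneg (by linarith : (0:ℝ) ≤ r) he6]

set_option maxHeartbeats 1000000 in
theorem stmt_5 (a δ : ℝ) (ha : a ∈ Set.Ioo (0 : ℝ) 1) (hδ : 1 ≤ δ)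
    (τ : ℝ → ℝ)
    (hτ : ∀ v, τ v = (Real.sqrt ((v ^ 2 / δ - a) ^ 2 + 4 * v ^ 2 / δ) - (v ^ 2 / δ - a)) / 2)
    (ξδ : ℝ) (hξδ : ξδ = (Real.sqrt ((δ - 1) ^ 2 + 4 * δ * a) - (δ - 1)) / 2) :
    ∀ v ∈ Set.Ico a 1,
      |τ v - ξδ| ≤ (1 / Real.sqrt δ) * (1 - 4 / (5 + Real.sqrt 5) * (a / Real.sqrt δ)) * |v - ξδ| := by
  obtain ⟨ha0, ha1⟩ := ha
  have hδ0 : (0:ℝ) < δ := by linarith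
  have hδne : δ ≠ 0 := ne_of_gt hδ0
  have hδa : 0 < δ*a := mul_pos hδ0 ha0
  set s := Real.sqrt δ with hsdef
  have hs2 : s ^ 2 = δ := Real.sq_sqrt hδ0.le
  have hsnn : 0 ≤ s := Real.sqrt_nonneg δ
  have hs1 : 1 ≤ s := by
    have h := Real.sqrt_le_sqrt hδ
    rwa [Real.sqrt_one] at h
  have hs0 : (0:ℝ) < s := by linarith only [hs1]
  set r := Real.sqrt 5 with hrdef
  have hr2 : r ^ 2 = 5 := Real.sq_sqrt (by norm_num)
  have hr0 : (0:ℝ) ≤ r := Real.sqrt_nonneg 5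
  have hr : 2 ≤ r := by
    have h : Real.sqrt (2^2) ≤ Real.sqrt 5 := Real.sqrt_le_sqrt (by norm_num)
    rwa [Real.sqrt_sq (by norm_num : (0:ℝ) ≤ 2)] at h
  have hr' : r ≤ 9/4 := by
    have h : Real.sqrt 5 ≤ Real.sqrt ((9/4)^2) := Real.sqrt_le_sqrt (by norm_num)
    rwa [Real.sqrt_sq (by norm_num : (0:ℝ) ≤ 9/4)] at h
  -- ξ facts
  have hPnn : (0:ℝ) ≤ (δ-1)^2 + 4*δ*a := by
    linarith only [sq_nonneg (δ-1), hδa]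
  have hP2 : (Real.sqrt ((δ-1)^2 + 4*δ*a))^2 = (δ-1)^2 + 4*δ*a := Real.sq_sqrt hPnn
  have hξq : ξδ^2 + (δ-1)*ξδ - δ*a = 0 := by
    rw [hξδ]; ring_nf; ring_nf at hP2; linear_combination hP2/4
  have hξ0 : 0 ≤ ξδ := by
    have h2 : Real.sqrt ((δ-1)^2) ≤ Real.sqrt ((δ-1)^2 + 4*δ*a) :=
      Real.sqrt_le_sqrt (by linarith only [hδa])
    rw [Real.sqrt_sq (by linarith : (0:ℝ) ≤ δ-1)] at h2
    rw [hξδ]; linarith only [h2]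
  have hξa : a < ξδ := by
    have h1 : (ξδ - a)*(ξδ + a + δ - 1) = a*(1-a) := by linear_combination hξq
    have h2 : 0 < ξδ - a :=
      posfac h1 (by linarith only [hξ0, ha0, hδ]) (mul_pos ha0 (by linarith only [ha1]))
    linarith only [h2]
  have hξpos : 0 < ξδ := lt_trans ha0 hξa
  have hξ1 : ξδ < 1 := by
    have h1 : (1 - ξδ)*(ξδ + δ) = δ*(1-a) := by linear_combination -hξq
    have h2 : 0 < 1 - ξδ :=
      posfac h1 (by linarith only [hξpos, hδ0]) (mul_pos hδ0 (by linarith only [ha1]))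
    linarith only [h2]
  intro v hv
  obtain ⟨hav, hv1⟩ := hv
  have hv0 : 0 < v := lt_of_lt_of_le ha0 hav
  set t := τ v with htdef
  -- t facts
  have h4u : (0:ℝ) ≤ 4*v^2/δ := by positivity
  have hSnn : (0:ℝ) ≤ (v^2/δ - a)^2 + 4*v^2/δ := by
    linarith only [sq_nonneg (v^2/δ - a), h4u]
  have hS2 : (Real.sqrt ((v^2/δ - a)^2 + 4*v^2/δ))^2 = (v^2/δ - a)^2 + 4*v^2/δ :=
    Real.sq_sqrt hSnn
  have htq0 : t^2 + (v^2/δ - a)*t - v^2/δ = 0 := by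
    rw [htdef, hτ v]; ring_nf; ring_nf at hS2; linear_combination hS2/4
  have htq : δ*t^2 + (v^2 - δ*a)*t - v^2 = 0 := by
    have h := htq0
    field_simp at h
    linear_combination h
  have ht0 : 0 ≤ t := by
    have h2 : Real.sqrt ((v^2/δ - a)^2) ≤ Real.sqrt ((v^2/δ - a)^2 + 4*v^2/δ) :=
      Real.sqrt_le_sqrt (by linarith only [h4u])
    rw [Real.sqrt_sq_eq_abs] at h2
    have h3 := le_trans (le_abs_self (v^2/δ - a)) h2
    rw [htdef, hτ v]; linarith only [h3]
  have hta : a ≤ t := by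
    have h1 : (t-a)*(δ*t+v^2) = v^2*(1-a) := by linear_combination htq
    have h2 : 0 ≤ t - a := nonnegfac h1
      (by linarith only [mul_nonneg hδ0.le ht0, pow_pos hv0 2])
      (mul_nonneg (sq_nonneg v) (by linarith only [ha1]))
    linarith only [h2]
  -- w facts
  set w := Real.sqrt (a^2/4 + v^2/δ) with hwdef
  have hwnn : (0:ℝ) ≤ a^2/4 + v^2/δ := by positivity
  have hw0 : 0 ≤ w := Real.sqrt_nonneg _
  have hw2 : w^2 = a^2/4 + v^2/δ := Real.sq_sqrt hwnn
  have hw2' : δ*w^2 = δ*a^2/4 + v^2 := by rw [hw2]; field_simp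
  have hvδ : (0:ℝ) ≤ v^2/δ := by positivity
  have hwa : a/2 ≤ w := by
    have h2 : Real.sqrt ((a/2)^2) ≤ Real.sqrt (a^2/4 + v^2/δ) :=
      Real.sqrt_le_sqrt (by linarith only [hvδ])
    rwa [Real.sqrt_sq (by linarith only [ha0] : (0:ℝ) ≤ a/2)] at h2
  have hsw0 : 0 ≤ s*w := mul_nonneg hsnn hw0
  have hsw2 : (s*w)^2 = δ*a^2/4 + v^2 := by rw [mul_pow, hs2, hw2']
  have hswv : v ≤ s*w := by
    have h2 : Real.sqrt (v^2) ≤ Real.sqrt ((s*w)^2) := by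
      apply Real.sqrt_le_sqrt
      rw [hsw2]
      have : (0:ℝ) ≤ δ*a^2/4 := by positivity
      linarith only [this]
    rwa [Real.sqrt_sq hv0.le, Real.sqrt_sq hsw0] at h2
  have hwub : s*w ≤ s*a/2 + v := by
    have h2 : Real.sqrt ((s*w)^2) ≤ Real.sqrt ((s*a/2 + v)^2) := by
      apply Real.sqrt_le_sqrt
      rw [hsw2]
      have h3 : (0:ℝ) ≤ s*a*v := by positivity
      have h4 : (s*a/2 + v)^2 = δ*a^2/4 + s*a*v + v^2 := by
        rw [← hs2]; ring
      linarith only [h3, h4]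
    rwa [Real.sqrt_sq hsw0,
      Real.sqrt_sq (by positivity : (0:ℝ) ≤ s*a/2 + v)] at h2
  -- t lower bound: δ*a/2 + δ*w - v^2 ≤ δ*t
  have htlb : δ*a/2 + δ*w - v^2 ≤ δ*t := by
    have hI : (δ*t - (δ*a/2 + δ*w - v^2)) * (δ*t + δ*w - δ*a/2) = δ*v^2*(w - a/2) := by
      linear_combination δ*htq - δ*hw2'
    have hF : 0 < δ*t + δ*w - δ*a/2 := by
      have p1 : δ*a ≤ δ*t := mul_le_mul_of_nonneg_left hta hδ0.le
      have p2 : δ*(a/2) ≤ δ*w := mul_le_mul_of_nonneg_left hwa hδ0.le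
      linarith only [p1, p2, hδa]
    have h2 := nonnegfac hI hF
      (mul_nonneg (mul_nonneg hδ0.le (sq_nonneg v)) (by linarith only [hwa]))
    linarith only [h2]
  -- D
  set D := δ*(t + ξδ - a) + v^2 with hDdef
  have hDlb : δ*(ξδ + w - a/2) ≤ D := by
    rw [hDdef]
    have h1 : δ*(ξδ + w - a/2) - (δ*(t + ξδ - a) + v^2)
        = (δ*a/2 + δ*w - v^2) - δ*t := by ring
    linarith only [h1, htlb]
  have hDpos : 0 < D := by
    rw [hDdef]
    have d1 : 0 < δ*ξδ := mul_pos hδ0 hξpos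
    have d2 : 0 ≤ δ*(t-a) := mul_nonneg hδ0.le (by linarith only [hta])
    have d3 : 0 < v^2 := pow_pos hv0 2
    have h1 : δ*(t + ξδ - a) + v^2 = δ*ξδ + δ*(t-a) + v^2 := by ring
    linarith only [d1, d2, d3, h1]
  -- identity (t-ξ)D = (v-ξ)(v+ξ)(1-ξ)
  have hII : (t - ξδ)*D = (v - ξδ)*((v+ξδ)*(1-ξδ)) := by
    rw [hDdef]; linear_combination htq - ξδ*hξq
  -- key inequality
  have hma : s^2*a = ξδ*(ξδ + s^2 - 1) := by
    linear_combination (a - ξδ)*hs2 - hξq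
  have hm0 : 0 ≤ ξδ + s^2 - 1 := by
    have : (1:ℝ) ≤ s^2 := by rw [hs2]; exact hδ
    linarith only [this, hξ0]
  have hvm : ξδ*(ξδ + s^2 - 1) ≤ s^2*v := by
    have h1 : s^2*a ≤ s^2*v := mul_le_mul_of_nonneg_left hav (sq_nonneg s)
    linarith only [h1, hma]
  have hJ := auxJ (s-1) ξδ r (by linarith only [hs1]) hξ0 (le_of_lt hξ1) hr hr'
  have hH : 0 ≤ r*s^3*v + r*s^3*ξδ + r*s^3*(s-1) - (r-1)*s*ξδ*(ξδ+s^2-1)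
      - (r/2)*s^2*(ξδ+s^2-1) - (r-1)*(ξδ+s^2-1)*v := by
    have hcoef : 0 ≤ r*s^3 - (r-1)*(ξδ+s^2-1) := by
      have p1 : (r-1)*(ξδ+s^2-1) ≤ (r-1)*s^2 :=
        mul_le_mul_of_nonneg_left (by linarith only [hξ1]) (by linarith only [hr])
      have p2 : 0 ≤ r*s^2*(s-1) :=
        mul_nonneg (mul_nonneg hr0 (sq_nonneg s)) (by linarith only [hs1])
      have p3 : (r-1)*s^2 ≤ r*s^2 :=
        mul_le_mul_of_nonneg_right (by linarith only : (r-1:ℝ) ≤ r) (sq_nonneg s)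
      have p4 : r*s^3 - r*s^2 = r*s^2*(s-1) := by ring
      linarith only [p1, p2, p3, p4]
    have hkey : (r*s^3*v + r*s^3*ξδ + r*s^3*(s-1) - (r-1)*s*ξδ*(ξδ+s^2-1)
        - (r/2)*s^2*(ξδ+s^2-1) - (r-1)*(ξδ+s^2-1)*v) * s^2
      = (r*s^3 - (r-1)*(ξδ+s^2-1))*(s^2*v - ξδ*(ξδ+s^2-1))
        + ((r/2)*ξδ + ξδ^2 + (1-r)*ξδ^3 + (2+3*r)*((s-1)*ξδ) + (7-4*r)*((s-1)*ξδ^2)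
        + (r/2)*(s-1)^2 + (11+3*r)*((s-1)^2*ξδ) + (5-2*r)*((s-1)^2*ξδ^2)
        + 2*r*(s-1)^3 + (13+4*r)*((s-1)^3*ξδ) + (s-1)^3*ξδ^2 + 3*r*(s-1)^4
        + (6+7/2*r)*((s-1)^4*ξδ) + 2*r*(s-1)^5 + (1+r)*((s-1)^5*ξδ) + (r/2)*(s-1)^6) := by
      ring
    exact nonnegfac hkey (by positivity)
      (add_nonneg (mul_nonneg hcoef (by linarith only [hvm])) hJ)
  have hGs : 0 ≤ r*s*v*ξδ + r*s*ξδ^2 + r*s*(s-1)*ξδ - (r-1)*s*a*ξδ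
      - (r/2)*s^2*a - (r-1)*a*v := by
    have h5 : (r*s*v*ξδ + r*s*ξδ^2 + r*s*(s-1)*ξδ - (r-1)*s*a*ξδ
        - (r/2)*s^2*a - (r-1)*a*v) * s^2
      = ξδ*(r*s^3*v + r*s^3*ξδ + r*s^3*(s-1) - (r-1)*s*ξδ*(ξδ+s^2-1)
        - (r/2)*s^2*(ξδ+s^2-1) - (r-1)*(ξδ+s^2-1)*v) := by
      linear_combination (-((r-1)*s*ξδ + (r/2)*s^2 + (r-1)*v))*hma
    exact nonnegfac h5 (by positivity) (mul_nonneg hξ0 hH)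
  have hstar : r*((v+ξδ)*(1-ξδ)) ≤ (r*s - (r-1)*a)*(ξδ + w - a/2) := by
    have h6 : s*((r*s - (r-1)*a)*(ξδ + w - a/2)) - s*(r*((v+ξδ)*(1-ξδ)))
      = r*s*(s*w - v) + (r-1)*(a*(s*a/2 + v - s*w))
        + (r*s*v*ξδ + r*s*ξδ^2 + r*s*(s-1)*ξδ - (r-1)*s*a*ξδ
          - (r/2)*s^2*a - (r-1)*a*v) := by ring
    have t1 : 0 ≤ r*s*(s*w - v) :=
      mul_nonneg (mul_nonneg hr0 hsnn) (by linarith only [hswv])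
    have t2 : 0 ≤ (r-1)*(a*(s*a/2 + v - s*w)) :=
      mul_nonneg (by linarith only [hr])
        (mul_nonneg ha0.le (by linarith only [hwub]))
    have h7 : s*(r*((v+ξδ)*(1-ξδ))) ≤ s*((r*s - (r-1)*a)*(ξδ + w - a/2)) := by
      linarith only [h6, t1, t2, hGs]
    exact le_of_mul_le_mul_left h7 hs0
  -- B
  have hrpos : (0:ℝ) < r := by linarith only [hr]
  have hBpos : 0 < r*s - (r-1)*a := by
    have p1 : (r-1)*a < (r-1)*1 :=
      mul_lt_mul_of_pos_left ha1 (by linarith only [hr])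
    have p2 : r*1 ≤ r*s := mul_le_mul_of_nonneg_left hs1 hr0
    linarith only [p1, p2]
  have hBeq : (1/s)*(1 - 4/(5+r)*(a/s)) = (r*s - (r-1)*a)/(r*s^2) := by
    have hsne : s ≠ 0 := ne_of_gt hs0
    have hrne : r ≠ 0 := ne_of_gt hrpos
    have h5rne : (5+r) ≠ 0 := by positivity
    field_simp
    ring_nf
    linear_combination a*hr2
  have hB0 : 0 ≤ (1/s)*(1 - 4/(5+r)*(a/s)) := by
    rw [hBeq]; exact div_nonneg hBpos.le (by positivity)
  have hBD : (v+ξδ)*(1-ξδ) ≤ ((1/s)*(1 - 4/(5+r)*(a/s)))*D := by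
    have h7 : ((1/s)*(1 - 4/(5+r)*(a/s)))*(δ*(ξδ + w - a/2))
        = ((r*s - (r-1)*a)*(ξδ + w - a/2))/r := by
      rw [hBeq, ← hs2]; field_simp
    have h8 : (v+ξδ)*(1-ξδ) ≤ ((r*s - (r-1)*a)*(ξδ + w - a/2))/r := by
      rw [le_div_iff₀ hrpos]; linarith only [hstar]
    calc (v+ξδ)*(1-ξδ) ≤ ((r*s - (r-1)*a)*(ξδ + w - a/2))/r := h8
      _ = ((1/s)*(1 - 4/(5+r)*(a/s)))*(δ*(ξδ + w - a/2)) := h7.symm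
      _ ≤ ((1/s)*(1 - 4/(5+r)*(a/s)))*D := mul_le_mul_of_nonneg_left hDlb hB0
  -- finish
  have hnn : 0 ≤ (v+ξδ)*(1-ξδ) :=
    mul_nonneg (by linarith only [hv0, hξ0]) (by linarith only [hξ1])
  have habs : |t - ξδ| * D = |v - ξδ| * ((v+ξδ)*(1-ξδ)) := by
    calc |t - ξδ| * D = |(t-ξδ)*D| := by rw [abs_mul, abs_of_pos hDpos]
      _ = |(v-ξδ)*((v+ξδ)*(1-ξδ))| := by rw [hII]
      _ = |v - ξδ| * ((v+ξδ)*(1-ξδ)) := by rw [abs_mul, abs_of_nonneg hnn]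
  have hfin : |t - ξδ| * D ≤ ((1/s)*(1 - 4/(5+r)*(a/s)) * |v - ξδ|) * D := by
    rw [habs]
    calc |v - ξδ| * ((v+ξδ)*(1-ξδ))
        ≤ |v - ξδ| * (((1/s)*(1 - 4/(5+r)*(a/s)))*D) :=
          mul_le_mul_of_nonneg_left hBD (abs_nonneg _)
      _ = ((1/s)*(1 - 4/(5+r)*(a/s)) * |v - ξδ|) * D := by ring
  exact le_of_mul_le_mul_right hfin hDpos
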